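/- Let d, n be positive integers and let Ω₁, …, Ωₙ be nonempty compact convex subsets of ℝ^d. Let X be the convex hull of ⋃ᵢ Ωᵢ, V = Ω₁ × ⋯ × Ωₙ, Y = { ((y₁,s₁),…,(yₙ,sₙ)) : ‖yᵢ‖ ≤ sᵢ for all i, ∑ᵢ sᵢ = 1 }, and f(x, v, y) = ∑ᵢ ⟨x − vᵢ, yᵢ⟩. Let r* = inf over x ∈ ℝ^d of max over i of dist(x, Ωᵢ). If (x*, v₁*, …, vₙ*, y*) is a Nash equilibrium of the game min over X × V, max over Y of f, then f(x*, v*, y*) = r*, and for every i, vᵢ* lies in the closed ball of center x* and radius r* (i.e., ‖x* − vᵢ*‖ ≤ r*), so the closed ball B(x*, r*) intersects every Ωᵢ. -/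

import Mathlib

/-- **SIB game: Nash equilibria give the SIB.** If `(x*, v*, y*)` is a Nash equilibrium of
the SIB game, then the value `f(x*, v*, y*)` equals the SIB radius
`r* = inf_x max_i dist(x, Ωᵢ)`, each `vᵢ*` lies in the closed ball `B(x*, r*)`,
and hence `B(x*, r*)` intersects every `Ωᵢ`. -/
theorem sib_game_nash_gives_sib (d n : ℕ) (hd : 0 < d) (hn : 0 < n)
    (Ω : Fin n → Set (EuclideanSpace ℝ (Fin d)))
    (hne : ∀ i, (Ω i).Nonempty) (hcpt : ∀ i, IsCompact (Ω i))
    (hconv : ∀ i, Convex ℝ (Ω i))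
    (xs : EuclideanSpace ℝ (Fin d)) (vs : Fin n → EuclideanSpace ℝ (Fin d))
    (ys : Fin n → (EuclideanSpace ℝ (Fin d)) × ℝ)
    (hxs : xs ∈ convexHull ℝ (⋃ i, Ω i)) (hvs : ∀ i, vs i ∈ Ω i)
    (hys₁ : ∀ i, ‖(ys i).1‖ ≤ (ys i).2) (hys₂ : (∑ i, (ys i).2) = 1)
    (hmin : ∀ (x : EuclideanSpace ℝ (Fin d)) (v : Fin n → EuclideanSpace ℝ (Fin d)),
      x ∈ convexHull ℝ (⋃ i, Ω i) → (∀ i, v i ∈ Ω i) →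
      (∑ i, (inner ℝ (xs - vs i) ((ys i).1) : ℝ)) ≤ ∑ i, (inner ℝ (x - v i) ((ys i).1) : ℝ))
    (hmax : ∀ y : Fin n → (EuclideanSpace ℝ (Fin d)) × ℝ,
      (∀ i, ‖(y i).1‖ ≤ (y i).2) → (∑ i, (y i).2) = 1 →
      (∑ i, (inner ℝ (xs - vs i) ((y i).1) : ℝ)) ≤ ∑ i, (inner ℝ (xs - vs i) ((ys i).1) : ℝ)) :
    (∑ i, (inner ℝ (xs - vs i) ((ys i).1) : ℝ)) =
      (⨅ x : EuclideanSpace ℝ (Fin d), ⨆ i, Metric.infDist x (Ω i)) ∧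
    (∀ i, vs i ∈ Metric.closedBall xs
      (⨅ x : EuclideanSpace ℝ (Fin d), ⨆ i, Metric.infDist x (Ω i))) ∧
    (∀ i, (Metric.closedBall xs
      (⨅ x : EuclideanSpace ℝ (Fin d), ⨆ i, Metric.infDist x (Ω i)) ∩ Ω i).Nonempty) := by
  classical
  haveI : Nonempty (Fin n) := ⟨⟨0, hn⟩⟩
  set F : ℝ := ∑ i, (inner ℝ (xs - vs i) ((ys i).1) : ℝ) with hFdef
  set X : Set (EuclideanSpace ℝ (Fin d)) := convexHull ℝ (⋃ i, Ω i) with hXdef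
  have hΩX : ∀ i, Ω i ⊆ X := fun i =>
    (Set.subset_iUnion Ω i).trans (subset_convexHull ℝ _)
  have hXconv : Convex ℝ X := convex_convexHull ℝ _
  -- Step 1 : F ≥ ‖xs - vs i‖ for every i
  have hFge : ∀ i, ‖xs - vs i‖ ≤ F := by
    intro i
    by_cases h0 : xs - vs i = 0
    · -- F ≥ 0 via the deviation y with zero vectors
      rw [h0, norm_zero]
      have h := hmax (fun j => ((0 : EuclideanSpace ℝ (Fin d)),
          if j = i then (1:ℝ) else 0)) (fun j => by
          by_cases hj : j = i <;> simp [hj]) (by simp)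
      simpa only [inner_zero_right, Finset.sum_const_zero] using h
    · have hne0 : ‖xs - vs i‖ ≠ 0 := norm_ne_zero_iff.mpr h0
      set w : EuclideanSpace ℝ (Fin d) := ‖xs - vs i‖⁻¹ • (xs - vs i) with hw
      have hwn : ‖w‖ = 1 := by
        rw [hw, norm_smul, norm_inv, norm_norm, inv_mul_cancel₀ hne0]
      have h := hmax (fun j => (if j = i then w else 0, if j = i then (1:ℝ) else 0))
        (fun j => by by_cases hj : j = i <;> simp [hj, hwn]) (by simp)
      have hval : (∑ j, (inner ℝ (xs - vs j)
          (if j = i then w else 0) : ℝ)) = ‖xs - vs i‖ := by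
        rw [Finset.sum_eq_single i]
        · rw [if_pos rfl, hw, real_inner_smul_right, real_inner_self_eq_norm_sq]
          rw [sq]
          field_simp
        · intro j _ hj; rw [if_neg hj, inner_zero_right]
        · intro hi; exact absurd (Finset.mem_univ i) hi
      refine le_trans (le_of_eq hval.symm) ?_
      exact h
  -- Step 2 : F ≤ ⨆ i, infDist x (Ω i) for every x
  have key : ∀ x : EuclideanSpace ℝ (Fin d), F ≤ ⨆ i, Metric.infDist x (Ω i) := by
    intro x
    set M : ℝ := ⨆ i, Metric.infDist x (Ω i) with hM
    have hbddM : BddAbove (Set.range fun i => Metric.infDist x (Ω i)) :=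
      (Set.finite_range _).bddAbove
    have hleM : ∀ i, Metric.infDist x (Ω i) ≤ M := fun i => le_ciSup hbddM i
    -- nearest points
    choose c hc1 hc2 using fun i => (hcpt i).exists_infDist_eq_dist (hne i) x
    -- project x onto the closure of X
    obtain ⟨p, hpK, hp⟩ := exists_norm_eq_iInf_of_complete_convex
      (Set.Nonempty.closure ⟨xs, hxs⟩) isClosed_closure.isComplete
      hXconv.closure x
    have hvar : ∀ w ∈ closure X, (inner ℝ (x - p) (w - p) : ℝ) ≤ 0 :=
      (norm_eq_iInf_iff_real_inner_le_zero hXconv.closure hpK).mp hp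
    have hcontr : ∀ w ∈ closure X, ‖p - w‖ ≤ ‖x - w‖ := by
      intro w hwX
      have h1 : (inner ℝ (x - p) (w - p) : ℝ) ≤ 0 := hvar w hwX
      have h2 := norm_add_sq_real (x - p) (p - w)
      have h3 : x - w = (x - p) + (p - w) := by abel
      have h4 : (inner ℝ (x - p) (p - w) : ℝ) = -(inner ℝ (x - p) (w - p) : ℝ) := by
        rw [show p - w = -(w - p) by abel, inner_neg_right]
      rw [← h3] at h2
      nlinarith [norm_nonneg (x - p), norm_nonneg (p - w), norm_nonneg (x - w)]
    -- F ≤ value at p by continuity of the payoff in the first variable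
    have hcont : Continuous fun z : EuclideanSpace ℝ (Fin d) =>
        ∑ i, (inner ℝ (z - c i) ((ys i).1) : ℝ) :=
      continuous_finset_sum _ fun i _ =>
        (Continuous.sub continuous_id continuous_const).inner continuous_const
    have hclosed : closure X ⊆ {z : EuclideanSpace ℝ (Fin d) |
        F ≤ ∑ i, (inner ℝ (z - c i) ((ys i).1) : ℝ)} :=
      closure_minimal (fun z hz => hmin z c hz hc1) (isClosed_le continuous_const hcont)
    have hFp : F ≤ ∑ i, (inner ℝ (p - c i) ((ys i).1) : ℝ) := hclosed hpK
    have hterm : ∀ i, (inner ℝ (p - c i) ((ys i).1) : ℝ) ≤ M * (ys i).2 := by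
      intro i
      have h1 : (inner ℝ (p - c i) ((ys i).1) : ℝ) ≤ ‖p - c i‖ * ‖(ys i).1‖ :=
        real_inner_le_norm _ _
      have h2 : ‖p - c i‖ ≤ M := by
        have hpc := hcontr (c i) (subset_closure (hΩX i (hc1 i)))
        calc ‖p - c i‖ ≤ ‖x - c i‖ := hpc
          _ = Metric.infDist x (Ω i) := by rw [hc2 i, dist_eq_norm]
          _ ≤ M := hleM i
      calc (inner ℝ (p - c i) ((ys i).1) : ℝ) ≤ ‖p - c i‖ * ‖(ys i).1‖ := h1
        _ ≤ M * (ys i).2 := by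
            apply mul_le_mul h2 (hys₁ i) (norm_nonneg _)
            exact le_trans (norm_nonneg _) h2
    calc F ≤ ∑ i, (inner ℝ (p - c i) ((ys i).1) : ℝ) := hFp
      _ ≤ ∑ i, M * (ys i).2 := Finset.sum_le_sum fun i _ => hterm i
      _ = M * ∑ i, (ys i).2 := by rw [Finset.mul_sum]
      _ = M := by rw [hys₂, mul_one]
  -- Step 3 : combine
  set r : ℝ := ⨅ x : EuclideanSpace ℝ (Fin d), ⨆ i, Metric.infDist x (Ω i) with hr
  have hbddBelow : BddBelow (Set.range fun x : EuclideanSpace ℝ (Fin d) =>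
      ⨆ i, Metric.infDist x (Ω i)) := by
    refine ⟨0, ?_⟩
    rintro y ⟨x, rfl⟩
    exact Real.iSup_nonneg fun i => Metric.infDist_nonneg
  have hFler : F ≤ r := le_ciInf key
  have hrleF : r ≤ F := by
    have h1 : r ≤ ⨆ i, Metric.infDist xs (Ω i) := ciInf_le hbddBelow xs
    have h2 : (⨆ i, Metric.infDist xs (Ω i)) ≤ F := by
      apply ciSup_le
      intro i
      calc Metric.infDist xs (Ω i) ≤ dist xs (vs i) :=
            Metric.infDist_le_dist_of_mem (hvs i)
        _ = ‖xs - vs i‖ := dist_eq_norm _ _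
        _ ≤ F := hFge i
    exact h1.trans h2
  have hFr : F = r := le_antisymm hFler hrleF
  have hball : ∀ i, vs i ∈ Metric.closedBall xs r := by
    intro i
    rw [Metric.mem_closedBall, dist_comm, dist_eq_norm, ← hFr]
    exact hFge i
  exact ⟨hFr, hball, fun i => ⟨vs i, hball i, hvs i⟩⟩
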